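/- Let Ω be a finite set with |Ω| = d ≥ 3, let F = Alt(Ω) be the alternating group on Ω, let p be a prime, let F(p) ≤ F be a p-Sylow subgroup, and let p^s (s ∈ ℕ, s ≥ 0) be the maximal power of p dividing d. Then F(p)_ω is a p-Sylow subgroup of F_ω for all ω ∈ Ω if and only if either (i) p > d, or (ii) s ≥ 1 and p^{s+1} > d, or (iii) d = 3 and p = 2. -/

import Mathlib

/-- `H` is a `p`-Sylow subgroup of `K` (both subgroups of an ambient group `G`):
`H` is a `p`-subgroup of `K` that is maximal among `p`-subgroups of `K`. -/
def IsSylowIn {G : Type*} [Group G] (p : ℕ) (H K : Subgroup G) : Prop :=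
  H ≤ K ∧ IsPGroup p H ∧
    ∀ Q : Subgroup G, Q ≤ K → IsPGroup p Q → H ≤ Q → Q = H

open Equiv MulAction Nat

section SylowAux
variable {G : Type*} [Group G] [Finite G] {p : ℕ}

lemma isSylowIn_card (hp : p.Prime) {H K : Subgroup G} (h : IsSylowIn p H K) :
    Nat.card H = p ^ (Nat.card K).factorization p := by
  haveI : Fact p.Prime := ⟨hp⟩
  obtain ⟨hle, hpg, hmax⟩ := h
  have hpg' : IsPGroup p (H.subgroupOf K) :=
    hpg.comap_of_injective K.subtype K.subtype_injective
  obtain ⟨S, hS⟩ := hpg'.exists_le_sylow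
  have hQle : (S : Subgroup K).map K.subtype ≤ K := by
    simpa using Subgroup.map_subtype_le (S : Subgroup K)
  have hQp : IsPGroup p ((S : Subgroup K).map K.subtype) :=
    S.isPGroup'.map K.subtype
  have hHQ : H ≤ (S : Subgroup K).map K.subtype := by
    have := Subgroup.map_mono (f := K.subtype) hS
    rwa [Subgroup.subgroupOf_map_subtype, inf_eq_left.mpr hle] at this
  have hEq := hmax _ hQle hQp hHQ
  have hcard : Nat.card ((S : Subgroup K).map K.subtype) = Nat.card S :=
    (Nat.card_congr (Subgroup.equivMapOfInjective _ _ K.subtype_injective).toEquiv).symm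
  rw [← hEq, hcard, Sylow.card_eq_multiplicity]

lemma isSylowIn_of_card (hp : p.Prime) {H K : Subgroup G} (hHK : H ≤ K) (hH : IsPGroup p H)
    (hcard : Nat.card H = p ^ (Nat.card K).factorization p) : IsSylowIn p H K := by
  haveI : Fact p.Prime := ⟨hp⟩
  refine ⟨hHK, hH, fun Q hQK hQ hHQ => ?_⟩
  have hQ' : IsPGroup p (Q.subgroupOf K) := hQ.comap_of_injective K.subtype K.subtype_injective
  obtain ⟨n, hn⟩ := IsPGroup.iff_card.mp hQ'
  have hcardQ : Nat.card Q = p ^ n := by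
    rw [← hn]
    exact Nat.card_congr (Subgroup.subgroupOfEquivOfLe hQK).toEquiv.symm
  have hdvd : p ^ n ∣ Nat.card K := hcardQ ▸ Subgroup.card_dvd_of_le hQK
  have hne : Nat.card K ≠ 0 := Nat.card_pos.ne'
  have hle : n ≤ (Nat.card K).factorization p :=
    (Nat.Prime.pow_dvd_iff_le_factorization hp hne).mp hdvd
  exact Subgroup.eq_of_le_of_card_ge hHQ (by
    rw [hcardQ, hcard]
    exact Nat.pow_le_pow_right hp.pos hle) |>.symm ▸ rfl

end SylowAux

section Arith

lemma padic_fac_mul_pow {p : ℕ} [hp : Fact p.Prime] (m : ℕ) :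
    ∀ s : ℕ, padicValNat p ((p ^ s * m)!) =
      padicValNat p (m !) + m * (Finset.range s).sum (fun i => p ^ i)
  | 0 => by simp
  | s + 1 => by
    have h1 : p ^ (s + 1) * m = p * (p ^ s * m) := by ring
    rw [h1, padicValNat_factorial_mul, padic_fac_mul_pow m s, Finset.sum_range_succ]
    ring

lemma arith_key {p s m : ℕ} (hp : p.Prime)
    (h : padicValNat p ((p ^ s * m)!) ≤ m * padicValNat p ((p ^ s)!)) : m < p := by
  haveI : Fact p.Prime := ⟨hp⟩
  have h1 := padic_fac_mul_pow (p := p) m s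
  have h2 := padic_fac_mul_pow (p := p) 1 s
  rw [mul_one] at h2
  rw [h1, h2] at h
  simp only [Nat.factorial_one, padicValNat.one, zero_add, one_mul] at h
  have hv : padicValNat p (m !) = 0 := by omega
  by_contra hlt
  push_neg at hlt
  have hdvd : p ∣ m ! := Nat.dvd_factorial hp.pos hlt
  rcases padicValNat.eq_zero_iff.mp hv with h' | h' | h'
  · exact hp.ne_one h'
  · exact (Nat.factorial_ne_zero m) h'
  · exact h' hdvd

end Arith

section ActionAux

lemma card_orbit_mul_card_stab {Ω : Type*} {G : Type*} [Group G] [MulAction G Ω] (b : Ω) :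
    Nat.card (orbit G b) * Nat.card (stabilizer G b) = Nat.card G := by
  rw [← Nat.card_prod]
  exact Nat.card_congr (MulAction.orbitProdStabilizerEquivGroup G b)

lemma card_inf_stab_eq {Ω : Type*} {G : Type*} [Group G] [MulAction G Ω] (H : Subgroup G) (ω : Ω) :
    Nat.card ↥(H ⊓ MulAction.stabilizer G ω) = Nat.card (stabilizer H ω) := by
  have h1 : stabilizer H ω = (H ⊓ MulAction.stabilizer G ω).subgroupOf H := by
    ext g
    simp only [Subgroup.mem_subgroupOf, Subgroup.mem_inf, MulAction.mem_stabilizer_iff,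
      Subgroup.smul_def]
    exact ⟨fun h => ⟨g.2, h⟩, fun h => h.2⟩
  rw [h1]
  exact (Nat.card_congr (Subgroup.subgroupOfEquivOfLe inf_le_left).toEquiv).symm

lemma alt_pretransitive {Ω : Type*} [Fintype Ω] [DecidableEq Ω]
    (hd3 : 3 ≤ Fintype.card Ω) (x y : Ω) :
    ∃ g ∈ alternatingGroup Ω, g x = y := by
  have h2 : 0 < ({x, y} : Finset Ω)ᶜ.card := by
    rw [Finset.card_compl]
    have h3 : ({x, y} : Finset Ω).card ≤ 2 := Finset.card_insert_le _ _ |>.trans (by simp)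
    omega
  obtain ⟨z, hz⟩ := Finset.card_pos.mp h2
  simp only [Finset.mem_compl, Finset.mem_insert, Finset.mem_singleton, not_or] at hz
  refine ⟨Equiv.swap z y * Equiv.swap x z, ?_, ?_⟩
  · rw [Equiv.Perm.mem_alternatingGroup, map_mul]
    rw [Equiv.Perm.sign_swap hz.2, Equiv.Perm.sign_swap (Ne.symm hz.1)]
    simp
  · simp [Equiv.swap_apply_of_ne_of_ne, Equiv.swap_apply_def, hz.1, hz.2]

end ActionAux

section Young
variable {Ω ι : Type*} [Fintype Ω] [DecidableEq Ω] [Fintype ι] [DecidableEq ι] (f : Ω → ι)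

def Young : Subgroup (Equiv.Perm Ω) where
  carrier := {g | ∀ x, f (g x) = f x}
  one_mem' := fun x => rfl
  mul_mem' := by
    intro a b ha hb x
    simp only [Equiv.Perm.mul_apply]
    rw [ha, hb]
  inv_mem' := by
    intro a ha x
    have := ha (a⁻¹ x)
    simpa using this.symm

lemma mem_Young_iff {g : Equiv.Perm Ω} : g ∈ Young f ↔ ∀ x, f (g x) = f x := Iff.rfl

noncomputable def youngEquiv : ↥(Young f) ≃ ∀ i, Equiv.Perm {x // f x = i} where
  toFun g i := Equiv.Perm.subtypePerm (g : Equiv.Perm Ω)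
    (fun x => by rw [show f ((g : Equiv.Perm Ω) x) = f x from g.2 x])
  invFun σ := ⟨(Equiv.sigmaFiberEquiv f).permCongr (Equiv.sigmaCongrRight σ), by
    intro x
    simp [Equiv.sigmaFiberEquiv, Equiv.sigmaCongrRight]
    exact (σ (f x) ⟨x, rfl⟩).2⟩
  left_inv g := by
    apply Subtype.ext
    apply Equiv.ext
    intro x
    simp [Equiv.sigmaFiberEquiv, Equiv.sigmaCongrRight]
  right_inv σ := by
    funext i
    apply Equiv.ext
    rintro ⟨x, hx⟩
    subst hx
    apply Subtype.ext
    simp [Equiv.sigmaFiberEquiv, Equiv.sigmaCongrRight]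

lemma card_young : Nat.card ↥(Young f) = ∏ i : ι, (Nat.card {x // f x = i})! := by
  rw [Nat.card_congr (youngEquiv f), Nat.card_pi]
  congr 1
  funext i
  rw [Nat.card_eq_fintype_card, Fintype.card_perm, Nat.card_eq_fintype_card]

lemma card_alt_inf_young (hxy : ∃ x y : Ω, x ≠ y ∧ f x = f y) :
    2 * Nat.card ↥(alternatingGroup Ω ⊓ Young f) = Nat.card ↥(Young f) := by
  set χ : ↥(Young f) →* ℤˣ := Equiv.Perm.sign.comp (Young f).subtype with hχ
  have hker : χ.ker = (alternatingGroup Ω ⊓ Young f).subgroupOf (Young f) := by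
    ext g
    simp only [MonoidHom.mem_ker, hχ, MonoidHom.comp_apply, Subgroup.mem_subgroupOf,
      Subgroup.mem_inf, Equiv.Perm.mem_alternatingGroup, Subgroup.coe_subtype]
    exact ⟨fun h => ⟨h, g.2⟩, fun h => h.1⟩
  have hsurj : Function.Surjective χ := by
    obtain ⟨x, y, hne, hf⟩ := hxy
    intro u
    rcases Int.units_eq_one_or u with rfl | rfl
    · exact ⟨1, map_one χ⟩
    · refine ⟨⟨Equiv.swap x y, fun z => ?_⟩, ?_⟩
      · rcases eq_or_ne z x with rfl | hzx
        · rw [Equiv.swap_apply_left, hf]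
        rcases eq_or_ne z y with rfl | hzy
        · rw [Equiv.swap_apply_right, hf]
        · rw [Equiv.swap_apply_of_ne_of_ne hzx hzy]
      · simp only [hχ, MonoidHom.comp_apply, Subgroup.coe_subtype]
        exact Equiv.Perm.sign_swap hne
  have h1 : Nat.card ↥(Young f) = Nat.card (↥(Young f) ⧸ χ.ker) * Nat.card χ.ker :=
    Subgroup.card_eq_card_quotient_mul_card_subgroup _
  have h2 : Nat.card (↥(Young f) ⧸ χ.ker) = Nat.card ℤˣ := by
    rw [Nat.card_congr (QuotientGroup.quotientKerEquivOfSurjective χ hsurj).toEquiv]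
  have h3 : Nat.card ℤˣ = 2 := by
    rw [Nat.card_eq_fintype_card, Fintype.card_units_int]
  have h4 : Nat.card χ.ker = Nat.card ↥(alternatingGroup Ω ⊓ Young f) := by
    rw [hker]
    exact Nat.card_congr (Subgroup.subgroupOfEquivOfLe inf_le_right).toEquiv
  rw [h1, h2, h3, h4]

end Young

/-- For `F = Alt(Ω)` with `|Ω| = d ≥ 3`, a `p`-Sylow subgroup `F(p)` of `F`, and `p^s`
the maximal power of `p` dividing `d`: the stabilizer `F(p)_ω` is a `p`-Sylow subgroup
of `F_ω` for all `ω` iff `p > d`, or `s ≥ 1` and `p^{s+1} > d`, or `(d,p) = (3,2)`. -/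
theorem stmt5 {Ω : Type*} [Fintype Ω] [DecidableEq Ω] (p d s : ℕ) (hp : p.Prime)
    (hd : Fintype.card Ω = d) (hd3 : 3 ≤ d)
    (hs : p ^ s ∣ d ∧ ¬ p ^ (s + 1) ∣ d)
    (Fp : Subgroup (Equiv.Perm Ω)) (hSylow : IsSylowIn p Fp (alternatingGroup Ω)) :
    (∀ ω : Ω,
        IsSylowIn p (Fp ⊓ MulAction.stabilizer (Equiv.Perm Ω) ω)
          (alternatingGroup Ω ⊓ MulAction.stabilizer (Equiv.Perm Ω) ω)) ↔
      d < p ∨ (1 ≤ s ∧ d < p ^ (s + 1)) ∨ (d = 3 ∧ p = 2) := by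
  classical
  haveI : Fact p.Prime := ⟨hp⟩
  haveI : Nontrivial Ω := Fintype.one_lt_card_iff_nontrivial.mp (by omega)
  have hFple : Fp ≤ alternatingGroup Ω := hSylow.1
  have hdpos : 0 < d := by omega
  have hAlt2 : 2 * Nat.card (alternatingGroup Ω) = d ! := by
    rw [Nat.card_eq_fintype_card, two_mul_card_alternatingGroup, Fintype.card_perm, hd]
  have hApos : Nat.card (alternatingGroup Ω) ≠ 0 := Nat.card_pos.ne'
  set A := Nat.card (alternatingGroup Ω) with hA
  set a := A.factorization p with ha
  have hFpcard : Nat.card Fp = p ^ a := isSylowIn_card hp hSylow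
  have hvd : d.factorization p = s := by
    have h1 := (Nat.Prime.pow_dvd_iff_le_factorization hp hdpos.ne').mp hs.1
    have h2 : ¬ (s + 1) ≤ d.factorization p := fun h =>
      hs.2 ((Nat.Prime.pow_dvd_iff_le_factorization hp hdpos.ne').mpr h)
    omega
  have hstabA : ∀ ω : Ω,
      d * Nat.card ↥(alternatingGroup Ω ⊓ MulAction.stabilizer (Equiv.Perm Ω) ω) = A := by
    intro ω
    rw [card_inf_stab_eq]
    have horbeq : (MulAction.orbit ↥(alternatingGroup Ω) ω) = Set.univ := by
      ext x
      simp only [Set.mem_univ, iff_true]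
      obtain ⟨g, hg, hgx⟩ := alt_pretransitive (hd ▸ hd3) ω x
      exact ⟨⟨g, hg⟩, hgx⟩
    have := card_orbit_mul_card_stab (G := ↥(alternatingGroup Ω)) ω
    rw [horbeq] at this
    rw [hA, ← this]
    congr 1
    rw [Nat.card_congr (Equiv.Set.univ Ω), Nat.card_eq_fintype_card, hd]
  have hsa : ∀ ω : Ω, s + (Nat.card
      ↥(alternatingGroup Ω ⊓ MulAction.stabilizer (Equiv.Perm Ω) ω)).factorization p = a := by
    intro ω
    have h := hstabA ω
    have hpos : Nat.card ↥(alternatingGroup Ω ⊓ MulAction.stabilizer (Equiv.Perm Ω) ω) ≠ 0 :=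
      Nat.card_pos.ne'
    have h2 : A.factorization p = d.factorization p +
        (Nat.card ↥(alternatingGroup Ω ⊓ MulAction.stabilizer (Equiv.Perm Ω) ω)).factorization p := by
      rw [← h, Nat.factorization_mul hdpos.ne' hpos]
      simp
    rw [← ha] at h2
    omega
  have horbstab : ∀ ω : Ω,
      Nat.card (orbit ↥Fp ω) * Nat.card ↥(Fp ⊓ MulAction.stabilizer (Equiv.Perm Ω) ω) = p ^ a := by
    intro ω
    rw [card_inf_stab_eq, card_orbit_mul_card_stab, hFpcard]
  constructor
  · -- forward direction
    intro hyp
    have hcardFpStab : ∀ ω : Ω,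
        Nat.card ↥(Fp ⊓ MulAction.stabilizer (Equiv.Perm Ω) ω) = p ^ (a - s) := by
      intro ω
      rw [isSylowIn_card hp (hyp ω)]
      congr 1
      have := hsa ω
      omega
    have horbFp : ∀ ω : Ω, Nat.card (orbit ↥Fp ω) = p ^ s := by
      intro ω
      have h3 := horbstab ω
      rw [hcardFpStab ω] at h3
      have hsle : s ≤ a := by have := hsa ω; omega
      have hsplit : p ^ a = p ^ s * p ^ (a - s) := by
        rw [← pow_add]
        congr 1
        omega
      rw [hsplit] at h3
      exact Nat.eq_of_mul_eq_mul_right (Nat.pow_pos hp.pos) h3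
    by_cases hs0 : s = 0
    · -- all orbits trivial, Fp = ⊥
      subst hs0
      have hFpbot : Fp = ⊥ := by
        rw [eq_bot_iff]
        intro g hg
        simp only [Subgroup.mem_bot]
        ext x
        have h1 := horbFp x
        rw [pow_zero] at h1
        haveI hsub : Subsingleton (orbit ↥Fp x) := (Nat.card_eq_one_iff_unique.mp h1).1
        have h2 := Subsingleton.elim
          (⟨(⟨g, hg⟩ : ↥Fp) • x, MulAction.mem_orbit _ _⟩ : orbit ↥Fp x)
          ⟨x, MulAction.mem_orbit_self x⟩
        simpa [Subtype.ext_iff, Subgroup.smul_def, Equiv.Perm.smul_def] using h2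
      have ha0 : a = 0 := by
        have hc1 : Nat.card Fp = 1 := by rw [hFpbot]; exact Subgroup.card_bot
        rw [hFpcard] at hc1
        by_contra ha0
        have := Nat.one_lt_pow ha0 hp.one_lt
        omega
      have hpA : ¬ p ∣ A := by
        intro hdvd
        have := Nat.Prime.factorization_pos_of_dvd hp hApos hdvd
        omega
      by_cases hp2 : p = 2
      · subst hp2
        right; right
        refine ⟨?_, rfl⟩
        by_contra hd4
        have h4 : (4 : ℕ) ∣ d ! := dvd_trans (by decide)
          (Nat.factorial_dvd_factorial (show 4 ≤ d by omega))
        rw [← hAlt2] at h4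
        exact hpA (by omega)
      · left
        by_contra hdp
        push_neg at hdp
        have hpd : p ∣ d ! := Nat.dvd_factorial hp.pos hdp
        rw [← hAlt2] at hpd
        rcases (Nat.Prime.dvd_mul hp).mp hpd with h | h
        · exact hp2 ((Nat.prime_dvd_prime_iff_eq hp Nat.prime_two).mp h)
        · exact hpA h
    · -- s ≥ 1 : Young subgroup counting
      right; left
      refine ⟨by omega, ?_⟩
      set f : Ω → Quotient (MulAction.orbitRel ↥Fp Ω) := Quotient.mk'' with hf
      have hfiber : ∀ i, Nat.card {x // f x = i} = p ^ s := by
        intro i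
        have hiff : ∀ x : Ω, f x = i ↔ x ∈ orbit ↥Fp (Quotient.out i) := by
          intro x
          rw [← MulAction.orbitRel_apply, ← Quotient.eq'']
          constructor
          · intro hx; rw [hf] at hx; rw [hx, Quotient.out_eq']
          · intro hx; rw [hf]; rw [hx, Quotient.out_eq']
        rw [Nat.card_congr (Equiv.subtypeEquivRight hiff), horbFp]
      set m := Fintype.card (Quotient (MulAction.orbitRel ↥Fp Ω)) with hm
      have hdm : d = m * p ^ s := by
        calc d = Fintype.card Ω := hd.symm
        _ = Fintype.card (Σ i, {x // f x = i}) :=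
          (Fintype.card_congr (Equiv.sigmaFiberEquiv f)).symm
        _ = ∑ i, Fintype.card {x // f x = i} := Fintype.card_sigma
        _ = ∑ _i : Quotient (MulAction.orbitRel ↥Fp Ω), p ^ s := by
          apply Finset.sum_congr rfl
          intro i _
          rw [← Nat.card_eq_fintype_card, hfiber]
        _ = m * p ^ s := by rw [Finset.sum_const, Finset.card_univ, smul_eq_mul]
      have hFpY : Fp ≤ alternatingGroup Ω ⊓ Young f := by
        refine le_inf hFple ?_
        intro g hg
        rw [mem_Young_iff]
        intro x
        exact Quotient.sound' ⟨⟨g, hg⟩, rfl⟩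
      have hmpos : 1 ≤ m := by
        rcases Nat.eq_zero_or_pos m with h0 | h1
        · rw [h0] at hdm; omega
        · exact h1
      have hxy : ∃ x y : Ω, x ≠ y ∧ f x = f y := by
        obtain ⟨ω⟩ := (inferInstance : Nonempty Ω)
        have h2 : 1 < Nat.card {x // f x = f ω} := by
          rw [hfiber]
          exact Nat.one_lt_pow hs0 hp.one_lt
        haveI : Nontrivial {x // f x = f ω} := Finite.one_lt_card_iff_nontrivial.mp h2
        obtain ⟨x, y, hxy⟩ := exists_pair_ne {x // f x = f ω}
        exact ⟨x.1, y.1, fun h => hxy (Subtype.ext h), x.2.trans y.2.symm⟩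
      have hYcard : Nat.card ↥(Young f) = ((p ^ s)!) ^ m := by
        rw [card_young]
        rw [Finset.prod_congr rfl (fun i _ => by rw [hfiber i])]
        rw [Finset.prod_const, Finset.card_univ]
      have h2C := card_alt_inf_young f hxy
      have hdvdC : p ^ a ∣ Nat.card ↥(alternatingGroup Ω ⊓ Young f) :=
        hFpcard ▸ Subgroup.card_dvd_of_le hFpY
      have hCpos : Nat.card ↥(alternatingGroup Ω ⊓ Young f) ≠ 0 := Nat.card_pos.ne'
      have hfac1 : (d !).factorization p = Nat.factorization 2 p + a := by
        rw [← hAlt2, Nat.factorization_mul (by norm_num) hApos]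
        simp
        exact ha.symm
      have hfac2 : (((p ^ s)!) ^ m).factorization p =
          Nat.factorization 2 p + (Nat.card ↥(alternatingGroup Ω ⊓ Young f)).factorization p := by
        rw [hYcard] at h2C
        rw [← h2C, Nat.factorization_mul (by norm_num) hCpos]
        simp
      have hle1 : a ≤ (Nat.card ↥(alternatingGroup Ω ⊓ Young f)).factorization p :=
        (Nat.Prime.pow_dvd_iff_le_factorization hp hCpos).mp hdvdC
      have hkey : (d !).factorization p ≤ (((p ^ s)!) ^ m).factorization p := by omega
      have hkey2 : padicValNat p ((p ^ s * m)!) ≤ m * padicValNat p ((p ^ s)!) := by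
        have e1 : (d !).factorization p = padicValNat p ((p ^ s * m)!) := by
          rw [Nat.factorization_def _ hp, hdm, mul_comm]
        have e2 : (((p ^ s)!) ^ m).factorization p = m * padicValNat p ((p ^ s)!) := by
          rw [Nat.factorization_pow, Finsupp.smul_apply, smul_eq_mul,
            Nat.factorization_def _ hp]
        rw [e1] at hkey
        rw [e2] at hkey
        exact hkey
      have hmp : m < p := arith_key hp hkey2
      calc d = m * p ^ s := hdm
      _ < p * p ^ s := by
        exact Nat.mul_lt_mul_of_lt_of_le hmp le_rfl (Nat.pow_pos hp.pos)
      _ = p ^ (s + 1) := by ring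
  · -- backward direction
    intro h ω
    have hle : Fp ⊓ MulAction.stabilizer (Equiv.Perm Ω) ω ≤
        alternatingGroup Ω ⊓ MulAction.stabilizer (Equiv.Perm Ω) ω :=
      inf_le_inf_right _ hFple
    have hdvd : Nat.card ↥(Fp ⊓ MulAction.stabilizer (Equiv.Perm Ω) ω) ∣ p ^ a :=
      hFpcard ▸ Subgroup.card_dvd_of_le inf_le_left
    obtain ⟨k, hk, hck⟩ := (Nat.dvd_prime_pow hp).mp hdvd
    have hPG : IsPGroup p ↥(Fp ⊓ MulAction.stabilizer (Equiv.Perm Ω) ω) :=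
      IsPGroup.iff_card.mpr ⟨k, hck⟩
    refine isSylowIn_of_card hp hle hPG ?_
    have hsa' := hsa ω
    have hposStab : Nat.card
        ↥(alternatingGroup Ω ⊓ MulAction.stabilizer (Equiv.Perm Ω) ω) ≠ 0 := Nat.card_pos.ne'
    have h1 : p ^ k ∣ Nat.card ↥(alternatingGroup Ω ⊓ MulAction.stabilizer (Equiv.Perm Ω) ω) :=
      hck ▸ Subgroup.card_dvd_of_le hle
    have h2 : k ≤ (Nat.card
        ↥(alternatingGroup Ω ⊓ MulAction.stabilizer (Equiv.Perm Ω) ω)).factorization p :=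
      (Nat.Prime.pow_dvd_iff_le_factorization hp hposStab).mp h1
    -- reduce the three cases to : d < p ^ (s+1) or the special case
    have hcase : d < p ^ (s + 1) ∨ (d = 3 ∧ p = 2) := by
      rcases h with h | h | h
      · left
        have hs0 : s = 0 := by
          by_contra hs0
          have : p ≤ p ^ s := Nat.le_self_pow hs0 p
          have : p ^ s ≤ d := Nat.le_of_dvd hdpos hs.1
          omega
        rw [hs0, pow_one]
        exact h
      · exact Or.inl h.2
      · exact Or.inr h
    rcases hcase with hlt | ⟨hd3', hp2⟩
    · -- main case
      have horb := horbstab ω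
      rw [hck] at horb
      have horbdvd : Nat.card (orbit ↥Fp ω) ∣ p ^ a := ⟨p ^ k, horb.symm⟩
      obtain ⟨j, hj, hcj⟩ := (Nat.dvd_prime_pow hp).mp horbdvd
      have hjk : j + k = a := by
        rw [hcj, ← pow_add] at horb
        exact Nat.pow_right_injective hp.two_le horb
      have horble : Nat.card (orbit ↥Fp ω) ≤ d := by
        have := Nat.card_le_card_of_injective (Subtype.val : orbit ↥Fp ω → Ω)
          Subtype.val_injective
        rwa [Nat.card_eq_fintype_card (α := Ω), hd] at this
      have hjs : j ≤ s := by
        rw [hcj] at horble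
        have : p ^ j < p ^ (s + 1) := lt_of_le_of_lt horble hlt
        have := (Nat.pow_lt_pow_iff_right hp.one_lt).mp this
        omega
      rw [hck]
      congr 1
      omega
    · -- special case d = 3, p = 2
      have hA3 : A = 3 := by
        have : d ! = 6 := by rw [hd3']; rfl
        omega
      have ha0 : a = 0 := by
        rw [ha, hA3, hp2]
        have : ¬ (2 : ℕ) ∣ 3 := by norm_num
        simp [Nat.factorization_eq_zero_of_not_dvd this]
      rw [hck]
      congr 1
      omega
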